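/- Let X be a Kaplansky–Hilbert module over L^0 and D ⊆ X a (bo)-dense submodule. The set L⁺(D) of all L^0-linear operators a on X with aD ⊆ D, D ⊆ D(a*), and a*D ⊆ D, equipped with a⁺ = a*|D, is an O*-algebra over L^0 with domain D; that is, it is closed under addition, L^0-scalar multiplication, composition, and the involution a ↦ a⁺, contains the identity on D, and every element is (bo)-closable. -/

import Mathlib

open MeasureTheory

namespace KHPaper

variable {Ω : Type} [MeasurableSpace Ω] {μ : Measure Ω}

/-- `L⁰(Ω)`: measurable complex functions modulo a.e. equality. -/
abbrev L0 (Ω : Type) [MeasurableSpace Ω] (μ : Measure Ω) := Ω →ₘ[μ] ℂ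
/-- real-valued `L⁰`. -/
abbrev L0R (Ω : Type) [MeasurableSpace Ω] (μ : Measure Ω) := Ω →ₘ[μ] ℝ

noncomputable instance : CommRing (L0 Ω μ) :=
  { (inferInstance : AddCommGroup (L0 Ω μ)),
    (inferInstance : CommMonoid (L0 Ω μ)) with
    left_distrib := by
      intro a b c
      apply AEEqFun.ext
      filter_upwards [AEEqFun.coeFn_mul a (b + c), AEEqFun.coeFn_add b c,
        AEEqFun.coeFn_mul a b, AEEqFun.coeFn_mul a c,
        AEEqFun.coeFn_add (a * b) (a * c)] with x h1 h2 h3 h4 h5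
      simp only [h1, h5, Pi.mul_apply, Pi.add_apply, h2, h3, h4, mul_add]
    right_distrib := by
      intro a b c
      apply AEEqFun.ext
      filter_upwards [AEEqFun.coeFn_mul (a + b) c, AEEqFun.coeFn_add a b,
        AEEqFun.coeFn_mul a c, AEEqFun.coeFn_mul b c,
        AEEqFun.coeFn_add (a * c) (b * c)] with x h1 h2 h3 h4 h5
      simp only [h1, h5, Pi.mul_apply, Pi.add_apply, h2, h3, h4, add_mul]
    zero_mul := by
      intro a
      apply AEEqFun.ext
      filter_upwards [AEEqFun.coeFn_mul 0 a, AEEqFun.coeFn_zero (β := ℂ) (μ := μ)] with x h1 h2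
      simp [h1, h2]
    mul_zero := by
      intro a
      apply AEEqFun.ext
      filter_upwards [AEEqFun.coeFn_mul a 0, AEEqFun.coeFn_zero (β := ℂ) (μ := μ)] with x h1 h2
      simp [h1, h2] }

/-- pointwise absolute value `L⁰ → L⁰ℝ`. -/
noncomputable def absL (f : L0 Ω μ) : L0R Ω μ := f.comp (fun z : ℂ => ‖z‖) continuous_norm
/-- pointwise real part. -/
noncomputable def reL (f : L0 Ω μ) : L0R Ω μ := f.comp Complex.re Complex.continuous_re
/-- pointwise complex conjugation. -/
noncomputable def conjL (f : L0 Ω μ) : L0 Ω μ :=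
  f.comp (starRingEnd ℂ) (by continuity)
/-- embedding of real `L⁰` into complex `L⁰`. -/
noncomputable def ofRealL (f : L0R Ω μ) : L0 Ω μ := f.comp Complex.ofReal Complex.continuous_ofReal
/-- pointwise square root on real `L⁰`. -/
noncomputable def sqrtL (f : L0R Ω μ) : L0R Ω μ := f.comp Real.sqrt Real.continuous_sqrt
/-- constants. -/
noncomputable def constL (Ω : Type) [MeasurableSpace Ω] (μ : Measure Ω) (c : ℂ) : L0 Ω μ :=
  AEEqFun.const Ω c

/-- idempotents of `L⁰` (the Boolean algebra `∇`). -/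
def IsIdem (π : L0 Ω μ) : Prop := π * π = π

/-- A family of idempotents is a partition of the unit in `∇`. -/
def IsPartition {ι : Type*} (π : ι → L0 Ω μ) : Prop :=
  (∀ i, IsIdem (π i)) ∧ (∀ i j, i ≠ j → π i * π j = 0) ∧
    (∀ e : L0 Ω μ, IsIdem e → (∀ i, π i * e = 0) → e = 0)

/-- a decreasing net of nonnegative elements of `L⁰ℝ` has infimum zero. -/
def InfZero {ι : Type*} (e : ι → L0R Ω μ) : Prop :=
  (∀ i, 0 ≤ e i) ∧ ∀ g : L0R Ω μ, (∀ i, g ≤ e i) → g ≤ 0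

/-- `(o)`-convergence of a net in `L⁰ℝ`. -/
def OConv {ι : Type*} [Preorder ι] (f : ι → L0R Ω μ) (l : L0R Ω μ) : Prop :=
  ∃ e : ι → L0R Ω μ, Antitone e ∧ InfZero e ∧ ∀ i, |f i - l| ≤ e i

/-- `(o)`-summability of a family in `L⁰ℝ` (order convergence of the net of partial sums). -/
def OSummable {ι : Type*} (g : ι → L0R Ω μ) : Prop :=
  ∃ s : L0R Ω μ, OConv (fun F : Finset ι => ∑ i ∈ F, g i) s

section LNS

variable {X : Type*} [AddCommGroup X]

/-- An `L⁰`-valued norm making `X` a lattice-normed space over `L⁰` (complex vector space case). -/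
structure LNSNorm (Ω : Type) [MeasurableSpace Ω] (μ : Measure Ω)
    (X : Type*) [AddCommGroup X] [Module ℂ X] where
  nrm : X → L0R Ω μ
  nrm_nonneg : ∀ x, 0 ≤ nrm x
  nrm_eq_zero : ∀ x, nrm x = 0 ↔ x = 0
  nrm_smul : ∀ (c : ℂ) (x : X), nrm (c • x) = ‖c‖ • nrm x
  nrm_triangle : ∀ x y, nrm (x + y) ≤ nrm x + nrm y

variable [Module ℂ X]

/-- `d`-decomposability (Kantorovich norm). -/
def LNSNorm.DDecomp (N : LNSNorm Ω μ X) : Prop :=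
  ∀ (x : X) (e₁ e₂ : L0R Ω μ), 0 ≤ e₁ → 0 ≤ e₂ → e₁ ⊓ e₂ = 0 → N.nrm x = e₁ + e₂ →
    ∃ x₁ x₂ : X, x = x₁ + x₂ ∧ N.nrm x₁ = e₁ ∧ N.nrm x₂ = e₂

/-- `(bo)`-convergence of a net in `X`. -/
def LNSNorm.BOConv (N : LNSNorm Ω μ X) {ι : Type*} [Preorder ι] (f : ι → X) (l : X) : Prop :=
  OConv (fun i => N.nrm (f i - l)) 0

/-- `(bo)`-Cauchy nets. -/
def LNSNorm.BOCauchy (N : LNSNorm Ω μ X) {ι : Type*} [Preorder ι] (f : ι → X) : Prop :=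
  ∃ e : ι → L0R Ω μ, Antitone e ∧ InfZero e ∧
    ∀ i j k, k ≤ i → k ≤ j → N.nrm (f i - f j) ≤ e k

/-- `(bo)`-completeness. -/
def LNSNorm.BOComplete (N : LNSNorm Ω μ X) : Prop :=
  ∀ (ι : Type) (_ : Nonempty ι) (_ : SemilatticeSup ι) (f : ι → X),
    N.BOCauchy f → ∃ l : X, N.BOConv f l

end LNS

section Norms
variable {X : Type*} [AddCommGroup X]
def DDecompN (nrm : X → L0R Ω μ) : Prop :=
  ∀ (x : X) (e₁ e₂ : L0R Ω μ), 0 ≤ e₁ → 0 ≤ e₂ → e₁ ⊓ e₂ = 0 → nrm x = e₁ + e₂ →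
    ∃ x₁ x₂ : X, x = x₁ + x₂ ∧ nrm x₁ = e₁ ∧ nrm x₂ = e₂
def BOConvN (nrm : X → L0R Ω μ) {ι : Type*} [Preorder ι] (f : ι → X) (l : X) : Prop :=
  OConv (fun i => nrm (f i - l)) 0
def BOCauchyN (nrm : X → L0R Ω μ) {ι : Type*} [Preorder ι] (f : ι → X) : Prop :=
  ∃ e : ι → L0R Ω μ, Antitone e ∧ InfZero e ∧
    ∀ i j k, k ≤ i → k ≤ j → nrm (f i - f j) ≤ e k
def BOCompleteN (nrm : X → L0R Ω μ) : Prop :=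
  ∀ (ι : Type) (_ : Nonempty ι) (_ : SemilatticeSup ι) (f : ι → X),
    BOCauchyN nrm f → ∃ l : X, BOConvN nrm f l
def BODenseN (nrm : X → L0R Ω μ) (D : Set X) : Prop :=
  ∀ x : X, ∃ (ι : Type) (_ : Nonempty ι) (_ : SemilatticeSup ι) (f : ι → X),
    (∀ i, f i ∈ D) ∧ BOConvN nrm f x
end Norms

/-- An `L⁰`-valued inner product on an `L⁰`-module. -/
structure KHInner (Ω : Type) [MeasurableSpace Ω] (μ : Measure Ω)
    (X : Type*) [AddCommGroup X] [Module (L0 Ω μ) X] where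
  inner : X → X → L0 Ω μ
  add_left : ∀ x y z, inner (x + y) z = inner x z + inner y z
  smul_left : ∀ (c : L0 Ω μ) (x y : X), inner (c • x) y = c * inner x y
  conj_symm : ∀ x y, inner x y = conjL (inner y x)
  self_real : ∀ x, inner x x = ofRealL (reL (inner x x))
  self_nonneg : ∀ x, 0 ≤ reL (inner x x)
  definite : ∀ x, inner x x = 0 → x = 0

section KH
variable {X : Type*} [AddCommGroup X] [Module (L0 Ω μ) X]
noncomputable def KHInner.knorm (K : KHInner Ω μ X) (x : X) : L0R Ω μ :=
  sqrtL (reL (K.inner x x))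
/-- `X` is a Kaplansky-Hilbert module: the induced norm is d-decomposable and (bo)-complete. -/
def KHInner.IsKH (K : KHInner Ω μ X) : Prop := DDecompN K.knorm ∧ BOCompleteN K.knorm

variable (K : KHInner Ω μ X) (D : Submodule (L0 Ω μ) X)
/-- operators with domain `D` mapping into `D`. -/
def MapsD (a : D →ₗ[L0 Ω μ] X) : Prop := ∀ φ : D, a φ ∈ D
def IsAdjAt (a : D →ₗ[L0 Ω μ] X) (ψ χ : X) : Prop :=
  ∀ φ : D, K.inner (a φ) ψ = K.inner (φ : X) χ
def AdjDomain (a : D →ₗ[L0 Ω μ] X) : Set X := {ψ | ∃ χ, IsAdjAt K D a ψ χ}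
/-- `L⁺(D)`. -/
def LPlus : Set (D →ₗ[L0 Ω μ] X) :=
  {a | MapsD D a ∧ (D : Set X) ⊆ AdjDomain K D a ∧
       ∀ ψ ∈ D, ∃ χ ∈ D, IsAdjAt K D a ψ χ}
def BOClosableOp (a : D →ₗ[L0 Ω μ] X) : Prop :=
  ∀ (ι : Type) (_ : Nonempty ι) (_ : SemilatticeSup ι) (f : ι → D) (y : X),
    BOConvN K.knorm (fun i => (f i : X)) 0 → BOConvN K.knorm (fun i => a (f i)) y → y = 0
/-- composition `a ∘ b` of operators on `D`, when `b` maps into `D`. -/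
noncomputable def compD (a b : D →ₗ[L0 Ω μ] X) (hb : MapsD D b) : D →ₗ[L0 Ω μ] X :=
  a.comp (LinearMap.codRestrict D b hb)

/-- endomorphism version: an operator on `D` having an adjoint with domain `⊇ D` and values in `D`. -/
def HasAdjE (a : Module.End (L0 Ω μ) D) : Prop :=
  ∀ ψ : D, ∃ χ : D, ∀ φ : D, K.inner (a φ : X) (ψ : X) = K.inner (φ : X) (χ : X)
/-- `L⁺(D)` realized inside `End(D)`. -/
def LPlusE : Set (Module.End (L0 Ω μ) D) := {a | HasAdjE K D a}
def IsAdjPairE (a b : Module.End (L0 Ω μ) D) : Prop :=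
  ∀ φ ψ : D, K.inner (a φ : X) (ψ : X) = K.inner (φ : X) (b ψ : X)
/-- the rank one operator `φ ⊗ ψ` on `D`. -/
noncomputable def rankOneE (φ ψ : D) : Module.End (L0 Ω μ) D where
  toFun η := K.inner (η : X) (ψ : X) • φ
  map_add' a b := by
    show K.inner (↑(a + b)) _ • φ = _
    rw [Submodule.coe_add, K.add_left]
    exact add_smul _ _ φ
  map_smul' c a := by
    show K.inner (↑(c • a)) _ • φ = _
    rw [Submodule.coe_smul, K.smul_left, RingHom.id_apply]
    exact mul_smul c _ φ
end KH

section Ops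
variable {M : Type*} [AddCommGroup M] [Module (L0 Ω μ) M]
/-- finite-generated operator: its range is a finite-generated submodule. -/
def FinGenOp (a : Module.End (L0 Ω μ) M) : Prop :=
  ∃ (n : ℕ) (g : Fin n → M), ∀ x : M, ∃ c : Fin n → L0 Ω μ, a x = ∑ i, c i • g i
def IsSubalgebraSet (U : Set (Module.End (L0 Ω μ) M)) : Prop :=
  (∀ a ∈ U, ∀ b ∈ U, a + b ∈ U) ∧ (∀ (c : L0 Ω μ), ∀ a ∈ U, c • a ∈ U) ∧
    (∀ a ∈ U, ∀ b ∈ U, a * b ∈ U)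
/-- standard algebras of operators: subalgebras containing all finite-generated operators. -/
def IsStandard (U : Set (Module.End (L0 Ω μ) M)) : Prop :=
  IsSubalgebraSet U ∧ ∀ a, FinGenOp a → a ∈ U
/-- the operator `a` is homogeneous of type one: `d(π ⬝ a(M)) = 1` for every nonzero idempotent. -/
def HomogOneOp (a : Module.End (L0 Ω μ) M) : Prop :=
  ∀ π : L0 Ω μ, IsIdem π → π ≠ 0 →
    (∃ g ∈ Set.range a, ∀ x ∈ Set.range a, ∃ c : L0 Ω μ, π • x = c • (π • g)) ∧
    ∃ x ∈ Set.range a, π • x ≠ 0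
end Ops

section DirectSum
variable {I : Type} [DecidableEq I] {X : I → Type*}
  [∀ i, AddCommGroup (X i)] [∀ i, Module (L0 Ω μ) (X i)]
  (K : ∀ i, KHInner Ω μ (X i)) (D : ∀ i, Submodule (L0 Ω μ) (X i))

/-- `D_I`: the submodule of the direct sum consisting of finitely supported tuples. -/
abbrev DI (D : ∀ i, Submodule (L0 Ω μ) (X i)) := Π₀ i, ↥(D i)

/-- the inner product of `X_I` restricted to `D_I`. -/
noncomputable def innerDI (φ ψ : DI D) : L0 Ω μ :=
  letI : ∀ (i : I) (x : ↥(D i)), Decidable (x ≠ 0) := fun _ x => Classical.dec _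
  φ.sum fun i x => (K i).inner (x : X i) ((ψ i : X i))

/-- the canonical copy of an operator on `D i` acting on `D_I`. -/
noncomputable def coordOp (i : I) (b : Module.End (L0 Ω μ) ↥(D i)) :
    Module.End (L0 Ω μ) (DI D) :=
  (DFinsupp.lsingle (R := L0 Ω μ) i).comp (b.comp (DFinsupp.lapply (R := L0 Ω μ) i))

/-- the canonical copy of the rank one operator `φ ⊗ φ`, `φ ∈ D i`, on `D_I`. -/
noncomputable def coordRankOne (i : I) (φ : ↥(D i)) : Module.End (L0 Ω μ) (DI D) :=
  coordOp D i (rankOneE (K i) (D i) φ φ)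

/-- coordinatewise operators `(a_i)` with each `a_i ∈ L⁺(D_i)`: the algebra `L⁺(D_i : i ∈ I)`. -/
def CoordLPlus : Set (Module.End (L0 Ω μ) (DI D)) :=
  {a | ∃ f : ∀ i, Module.End (L0 Ω μ) ↥(D i),
    (∀ i, HasAdjE (K i) (D i) (f i)) ∧ ∀ (φ : DI D) (i : I), a φ i = f i (φ i)}

/-- adjoint pairs on `D_I`. -/
def IsAdjPairDI (a b : Module.End (L0 Ω μ) (DI D)) : Prop :=
  ∀ φ ψ : DI D, innerDI K D (a φ) ψ = innerDI K D φ (b ψ)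

/-- the maximal `O*`-algebra `L⁺(D_I)`. -/
def LPlusDI : Set (Module.End (L0 Ω μ) (DI D)) :=
  {a | ∃ b, IsAdjPairDI K D a b}

/-- `*`-subalgebras of operators on `D_I`. -/
def IsStarSubalgDI (A : Set (Module.End (L0 Ω μ) (DI D))) : Prop :=
  IsSubalgebraSet A ∧ ∀ a ∈ A, ∃ b ∈ A, IsAdjPairDI K D a b

/-- projections on `D_I`: idempotent and self-adjoint. -/
def IsProjDI (p : Module.End (L0 Ω μ) (DI D)) : Prop :=
  p * p = p ∧ IsAdjPairDI K D p p

/-- the range of `p` is concentrated on a single coordinate. -/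
def SingleCoordRange (p : Module.End (L0 Ω μ) (DI D)) : Prop :=
  ∃ i : I, ∀ (φ : DI D) (j : I), j ≠ i → p φ j = 0

/-- `M(A)`: rank one projections in `A` whose range generators have a unique
nonzero coordinate. -/
def MSet (A : Set (Module.End (L0 Ω μ) (DI D))) :
    Set (Module.End (L0 Ω μ) (DI D)) :=
  {p | p ∈ A ∧ IsProjDI K D p ∧ HomogOneOp p ∧ SingleCoordRange D p}

end DirectSum
/-- A Banach–Kantorovich space over `L⁰` with its `L⁰`-module structure. -/
structure BKSpace (Ω : Type) [MeasurableSpace Ω] (μ : Measure Ω)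
    (X : Type*) [AddCommGroup X] [Module (L0 Ω μ) X] where
  nrm : X → L0R Ω μ
  nrm_nonneg : ∀ x, 0 ≤ nrm x
  nrm_eq_zero : ∀ x, nrm x = 0 ↔ x = 0
  nrm_smul : ∀ (c : L0 Ω μ) (x : X), nrm (c • x) = absL c * nrm x
  nrm_triangle : ∀ x y, nrm (x + y) ≤ nrm x + nrm y
  ddecomp : DDecompN nrm
  complete : BOCompleteN nrm



section Helpers

lemma conjL_coe (f : L0 Ω μ) : ⇑(conjL f) =ᵐ[μ] fun ω => (starRingEnd ℂ) (f ω) :=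
  AEEqFun.coeFn_comp _ _ f

lemma reL_coe (f : L0 Ω μ) : ⇑(reL f) =ᵐ[μ] fun ω => (f ω).re :=
  AEEqFun.coeFn_comp _ _ f

lemma absL_coe (f : L0 Ω μ) : ⇑(absL f) =ᵐ[μ] fun ω => ‖f ω‖ :=
  AEEqFun.coeFn_comp _ _ f

lemma sqrtL_coe (f : L0R Ω μ) : ⇑(sqrtL f) =ᵐ[μ] fun ω => Real.sqrt (f ω) :=
  AEEqFun.coeFn_comp _ _ f

lemma ofRealL_coe (f : L0R Ω μ) : ⇑(ofRealL f) =ᵐ[μ] fun ω => ((f ω : ℝ) : ℂ) :=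
  AEEqFun.coeFn_comp _ _ f

lemma conjL_add (f g : L0 Ω μ) : conjL (f + g) = conjL f + conjL g := by
  apply AEEqFun.ext
  filter_upwards [conjL_coe (f + g), AEEqFun.coeFn_add f g,
    AEEqFun.coeFn_add (conjL f) (conjL g), conjL_coe f, conjL_coe g] with ω h1 h2 h3 h4 h5
  simp only [h1, h3, Pi.add_apply, h2, h4, h5, map_add]

lemma conjL_mul (f g : L0 Ω μ) : conjL (f * g) = conjL f * conjL g := by
  apply AEEqFun.ext
  filter_upwards [conjL_coe (f * g), AEEqFun.coeFn_mul f g,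
    AEEqFun.coeFn_mul (conjL f) (conjL g), conjL_coe f, conjL_coe g] with ω h1 h2 h3 h4 h5
  simp only [h1, h3, Pi.mul_apply, h2, h4, h5, map_mul]

lemma conjL_neg (f : L0 Ω μ) : conjL (-f) = -conjL f := by
  apply AEEqFun.ext
  filter_upwards [conjL_coe (-f), AEEqFun.coeFn_neg f,
    AEEqFun.coeFn_neg (conjL f), conjL_coe f] with ω h1 h2 h3 h4
  simp only [h1, h3, Pi.neg_apply, h2, h4, map_neg]

lemma conjL_conjL (f : L0 Ω μ) : conjL (conjL f) = f := by
  apply AEEqFun.ext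
  filter_upwards [conjL_coe (conjL f), conjL_coe f] with ω h1 h2
  simp only [h1, h2, Complex.conj_conj]

section InnerLemmas

variable {X : Type*} [AddCommGroup X] [Module (L0 Ω μ) X] (K : KHInner Ω μ X)

lemma inner_add_right (x y z : X) : K.inner x (y + z) = K.inner x y + K.inner x z := by
  rw [K.conj_symm x (y + z), K.add_left, conjL_add, ← K.conj_symm x y, ← K.conj_symm x z]

lemma inner_smul_right (c : L0 Ω μ) (x y : X) :
    K.inner x (c • y) = conjL c * K.inner x y := by
  rw [K.conj_symm x (c • y), K.smul_left, conjL_mul, ← K.conj_symm x y]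

lemma inner_neg_left (x y : X) : K.inner (-x) y = -K.inner x y := by
  rw [← neg_one_smul (L0 Ω μ) x, K.smul_left, neg_one_mul]

lemma inner_neg_right (x y : X) : K.inner x (-y) = -K.inner x y := by
  rw [K.conj_symm x (-y), inner_neg_left, conjL_neg, ← K.conj_symm x y]

lemma inner_sub_right (x y z : X) : K.inner x (y - z) = K.inner x y - K.inner x z := by
  rw [sub_eq_add_neg, inner_add_right, inner_neg_right, ← sub_eq_add_neg]

lemma inner_sub_left (x y z : X) : K.inner (x - y) z = K.inner x z - K.inner y z := by
  rw [sub_eq_add_neg, K.add_left, inner_neg_left, ← sub_eq_add_neg]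

lemma knorm_coe (x : X) :
    ⇑(K.knorm x) =ᵐ[μ] fun ω => Real.sqrt ((reL (K.inner x x)) ω) :=
  sqrtL_coe _

lemma knorm_nonneg (x : X) : 0 ≤ K.knorm x := by
  rw [← AEEqFun.coeFn_le]
  filter_upwards [knorm_coe K x, AEEqFun.coeFn_zero (β := ℝ) (μ := μ)] with ω h1 h2
  rw [h1, h2]
  exact Real.sqrt_nonneg _

lemma knorm_sub_comm (x y : X) : K.knorm (x - y) = K.knorm (y - x) := by
  have h : K.inner (x - y) (x - y) = K.inner (y - x) (y - x) := by
    rw [show x - y = -(y - x) by abel, inner_neg_left, inner_neg_right, neg_neg]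
  unfold KHInner.knorm
  rw [h]

lemma absL_nonneg (f : L0 Ω μ) : 0 ≤ absL f := by
  rw [← AEEqFun.coeFn_le]
  filter_upwards [absL_coe f, AEEqFun.coeFn_zero (β := ℝ) (μ := μ)] with ω h1 h2
  rw [h1, h2]
  exact norm_nonneg _

lemma absL_nonpos_eq_zero {f : L0 Ω μ} (h : absL f ≤ 0) : f = 0 := by
  apply AEEqFun.ext
  filter_upwards [AEEqFun.coeFn_le.2 h, absL_coe f, AEEqFun.coeFn_zero (β := ℝ) (μ := μ),
    AEEqFun.coeFn_zero (β := ℂ) (μ := μ)] with ω h1 h2 h3 h4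
  rw [h2, h3] at h1
  rw [h4]
  exact norm_eq_zero.1 (le_antisymm h1 (norm_nonneg _))

lemma absL_add_le (f g : L0 Ω μ) : absL (f + g) ≤ absL f + absL g := by
  rw [← AEEqFun.coeFn_le]
  filter_upwards [absL_coe (f + g), AEEqFun.coeFn_add f g,
    AEEqFun.coeFn_add (absL f) (absL g), absL_coe f, absL_coe g] with ω h1 h2 h3 h4 h5
  simp only [h1, h2, h3, h4, h5, Pi.add_apply]
  exact norm_add_le _ _

end InnerLemmas


section Nets

lemma addL_le_addL {a b c d : L0R Ω μ} (h1 : a ≤ b) (h2 : c ≤ d) : a + c ≤ b + d := by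
  rw [← AEEqFun.coeFn_le]
  filter_upwards [AEEqFun.coeFn_le.2 h1, AEEqFun.coeFn_le.2 h2,
    AEEqFun.coeFn_add a c, AEEqFun.coeFn_add b d] with ω e1 e2 e3 e4
  rw [e3, e4, Pi.add_apply, Pi.add_apply]
  exact add_le_add e1 e2

lemma mulL_le_mulL {a b c d : L0R Ω μ} (ha : 0 ≤ a) (hc : 0 ≤ c) (h1 : a ≤ b) (h2 : c ≤ d) :
    a * c ≤ b * d := by
  rw [← AEEqFun.coeFn_le]
  filter_upwards [AEEqFun.coeFn_le.2 h1, AEEqFun.coeFn_le.2 h2, AEEqFun.coeFn_le.2 ha,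
    AEEqFun.coeFn_le.2 hc, AEEqFun.coeFn_mul a c, AEEqFun.coeFn_mul b d,
    AEEqFun.coeFn_zero (β := ℝ) (μ := μ)] with ω e1 e2 e3 e4 e5 e6 e7
  rw [e5, e6, Pi.mul_apply, Pi.mul_apply]
  rw [e7] at e3 e4
  exact mul_le_mul e1 e2 e4 (le_trans e3 e1)

lemma addL_nonneg {a b : L0R Ω μ} (ha : 0 ≤ a) (hb : 0 ≤ b) : 0 ≤ a + b := by
  have := addL_le_addL ha hb
  rwa [add_zero] at this

lemma le_of_le_cofinal {ι : Type} [SemilatticeSup ι] {e : ι → L0R Ω μ} (he : Antitone e)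
    {g : L0R Ω μ} (i₀ : ι) (h : ∀ i, i₀ ≤ i → g ≤ e i) : ∀ i, g ≤ e i := fun i =>
  le_trans (h (i ⊔ i₀) le_sup_right) (he le_sup_left)

lemma infZero_add {ι : Type} [SemilatticeSup ι] {e e' : ι → L0R Ω μ}
    (he : Antitone e) (he' : Antitone e') (h : InfZero e) (h' : InfZero e') :
    InfZero (fun i => e i + e' i) := by
  constructor
  · exact fun i => addL_nonneg (h.1 i) (h'.1 i)
  · intro g hg
    apply h'.2
    intro j
    have key : ∀ i, g - e' j ≤ e i := by
      apply le_of_le_cofinal he j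
      intro i hi
      have h1 := hg i
      have h2 : e' i ≤ e' j := he' hi
      rw [← AEEqFun.coeFn_le]
      filter_upwards [AEEqFun.coeFn_le.2 h1, AEEqFun.coeFn_le.2 h2,
        AEEqFun.coeFn_sub g (e' j), AEEqFun.coeFn_add (e i) (e' i)] with ω e1 e2 e3 e4
      rw [e4, Pi.add_apply] at e1
      rw [e3, Pi.sub_apply]
      linarith
    have h0 := h.2 _ key
    rw [← AEEqFun.coeFn_le]
    filter_upwards [AEEqFun.coeFn_le.2 h0, AEEqFun.coeFn_sub g (e' j),
      AEEqFun.coeFn_zero (β := ℝ) (μ := μ)] with ω e1 e2 e3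
    rw [e2, Pi.sub_apply, e3, Pi.zero_apply] at e1
    linarith

lemma scale_le_zero {ι : Type} [Nonempty ι] [SemilatticeSup ι] {e : ι → L0R Ω μ}
    (he : Antitone e) (hin : InfZero e) {c h : L0R Ω μ} (hc : 0 ≤ c)
    (hb : ∀ i, h ≤ c * e i) : h ≤ 0 := by
  obtain ⟨i₀⟩ := (inferInstance : Nonempty ι)
  have hstep : ∀ n : ℕ, h ≤ ((c - AEEqFun.const Ω ((n : ℝ) + 1)) ⊔ 0) * e i₀ := by
    intro n
    set r : L0R Ω μ := (c - AEEqFun.const Ω ((n : ℝ) + 1)) ⊔ 0 with hr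
    have rcoe : ⇑r =ᵐ[μ] fun ω => max (c ω - ((n : ℝ) + 1)) 0 := by
      filter_upwards [AEEqFun.coeFn_sup (c - AEEqFun.const Ω ((n : ℝ) + 1)) 0,
        AEEqFun.coeFn_sub c (AEEqFun.const Ω ((n : ℝ) + 1)),
        AEEqFun.coeFn_const Ω ((n : ℝ) + 1), AEEqFun.coeFn_zero (β := ℝ) (μ := μ)]
        with ω e1 e2 e3 e4
      rw [e1, e2, e4, Pi.sub_apply, e3]
      rfl
    set g : L0R Ω μ := ((n : ℝ) + 1)⁻¹ • (h - r * e i₀) with hg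
    have hgle : ∀ i, g ≤ e i := by
      apply le_of_le_cofinal he i₀
      intro i hi
      rw [← AEEqFun.coeFn_le]
      filter_upwards [AEEqFun.coeFn_smul (((n : ℝ) + 1)⁻¹) (h - r * e i₀),
        AEEqFun.coeFn_sub h (r * e i₀), AEEqFun.coeFn_mul r (e i₀), rcoe,
        AEEqFun.coeFn_le.2 (hb i), AEEqFun.coeFn_mul c (e i),
        AEEqFun.coeFn_le.2 (hin.1 i), AEEqFun.coeFn_le.2 (hin.1 i₀),
        AEEqFun.coeFn_le.2 hc, AEEqFun.coeFn_le.2 (he hi),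
        AEEqFun.coeFn_zero (β := ℝ) (μ := μ)] with ω e1 e2 e3 e4 e5 e6 e7 e8 e9 e10 e11
      rw [e1, Pi.smul_apply, e2, Pi.sub_apply, e3, Pi.mul_apply, e4]
      rw [e6, Pi.mul_apply] at e5
      simp only [e11, Pi.zero_apply] at e7 e8 e9
      have hn1 : (0 : ℝ) < (n : ℝ) + 1 := by positivity
      rcases le_total (c ω) ((n : ℝ) + 1) with hcn | hcn
      · have hmax : max (c ω - ((n : ℝ) + 1)) 0 = 0 := max_eq_right (by linarith)
        rw [hmax, smul_eq_mul]
        have : h ω ≤ ((n : ℝ) + 1) * e i ω := by nlinarith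
        rw [inv_mul_le_iff₀ hn1]
        linarith
      · have hmax : max (c ω - ((n : ℝ) + 1)) 0 = c ω - ((n : ℝ) + 1) :=
          max_eq_left (by linarith)
        rw [hmax, smul_eq_mul, inv_mul_le_iff₀ hn1]
        nlinarith
    have hg0 := hin.2 g hgle
    rw [← AEEqFun.coeFn_le]
    filter_upwards [AEEqFun.coeFn_le.2 hg0,
      AEEqFun.coeFn_smul (((n : ℝ) + 1)⁻¹) (h - r * e i₀),
      AEEqFun.coeFn_sub h (r * e i₀), AEEqFun.coeFn_mul r (e i₀),
      AEEqFun.coeFn_zero (β := ℝ) (μ := μ)] with ω e1 e2 e3 e4 e5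
    rw [e2, Pi.smul_apply, e3, Pi.sub_apply, e4, Pi.mul_apply, e5, Pi.zero_apply, smul_eq_mul] at e1
    rw [e4, Pi.mul_apply]
    have hn1 : (0 : ℝ) < (n : ℝ) + 1 := by positivity
    have h7 := mul_le_mul_of_nonneg_left e1 (le_of_lt hn1)
    rw [mul_zero, ← mul_assoc, mul_inv_cancel₀ (ne_of_gt hn1), one_mul] at h7
    linarith
  have hae : ∀ᵐ ω ∂μ, ∀ n : ℕ, h ω ≤ max (c ω - ((n : ℝ) + 1)) 0 * e i₀ ω := by
    rw [ae_all_iff]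
    intro n
    filter_upwards [AEEqFun.coeFn_le.2 (hstep n),
      AEEqFun.coeFn_mul ((c - AEEqFun.const Ω ((n : ℝ) + 1)) ⊔ 0) (e i₀),
      AEEqFun.coeFn_sup (c - AEEqFun.const Ω ((n : ℝ) + 1)) 0,
      AEEqFun.coeFn_sub c (AEEqFun.const Ω ((n : ℝ) + 1)),
      AEEqFun.coeFn_const Ω ((n : ℝ) + 1), AEEqFun.coeFn_zero (β := ℝ) (μ := μ)]
      with ω e1 e2 e3 e4 e5 e6
    rw [e2, Pi.mul_apply, e3, e4, Pi.sub_apply, e5, e6, Pi.zero_apply] at e1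
    exact e1
  rw [← AEEqFun.coeFn_le]
  filter_upwards [hae, AEEqFun.coeFn_zero (β := ℝ) (μ := μ)] with ω h1 h2
  rw [h2, Pi.zero_apply]
  obtain ⟨n, hn⟩ := exists_nat_ge (c ω)
  have h3 := h1 n
  rw [max_eq_right (by linarith)] at h3
  linarith

lemma bound_le_zero {ι : Type} [Nonempty ι] [SemilatticeSup ι] {e e' : ι → L0R Ω μ}
    (he : Antitone e) (hin : InfZero e) (he' : Antitone e') (hin' : InfZero e')
    {c c' g : L0R Ω μ} (hc : 0 ≤ c) (hc' : 0 ≤ c')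
    (hb : ∀ i, g ≤ c * e i + c' * e' i) : g ≤ 0 := by
  have hE : Antitone (fun i => e i + e' i) := fun i j hij => addL_le_addL (he hij) (he' hij)
  apply scale_le_zero hE (infZero_add he he' hin hin') (addL_nonneg hc hc')
  intro i
  refine le_trans (hb i) ?_
  rw [← AEEqFun.coeFn_le]
  filter_upwards [AEEqFun.coeFn_add (c * e i) (c' * e' i), AEEqFun.coeFn_mul c (e i),
    AEEqFun.coeFn_mul c' (e' i), AEEqFun.coeFn_mul (c + c') (e i + e' i),
    AEEqFun.coeFn_add c c', AEEqFun.coeFn_add (e i) (e' i),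
    AEEqFun.coeFn_le.2 hc, AEEqFun.coeFn_le.2 hc', AEEqFun.coeFn_le.2 (hin.1 i),
    AEEqFun.coeFn_le.2 (hin'.1 i), AEEqFun.coeFn_zero (β := ℝ) (μ := μ)]
    with ω e1 e2 e3 e4 e5 e6 e7 e8 e9 e10 e11
  rw [e1, Pi.add_apply, e2, e3, Pi.mul_apply, Pi.mul_apply, e4, Pi.mul_apply, e5, e6,
    Pi.add_apply, Pi.add_apply]
  simp only [e11, Pi.zero_apply] at e7 e8 e9 e10
  nlinarith

end Nets


section CS

noncomputable def cqC (q : ℚ × ℚ) : ℂ := ⟨(q.1 : ℝ), (q.2 : ℝ)⟩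

lemma denseRange_cqC : DenseRange cqC := by
  rw [Metric.denseRange_iff]
  intro z ε hε
  obtain ⟨q1, hq1⟩ := exists_rat_near z.re (by linarith : (0:ℝ) < ε/3)
  obtain ⟨q2, hq2⟩ := exists_rat_near z.im (by linarith : (0:ℝ) < ε/3)
  refine ⟨(q1, q2), ?_⟩
  have hle : dist z (cqC (q1, q2)) ≤ |z.re - (q1:ℝ)| + |z.im - (q2:ℝ)| := by
    rw [Complex.dist_eq]
    refine le_trans (Complex.norm_le_abs_re_add_abs_im _) ?_
    simp [cqC, Complex.sub_re, Complex.sub_im]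
  linarith

lemma pointCS {A B : ℝ} {t : ℂ} (hA : 0 ≤ A) (hB : 0 ≤ B)
    (h : ∀ q : ℚ × ℚ,
      0 ≤ A + 2 * ((starRingEnd ℂ) (cqC q) * t).re + Complex.normSq (cqC q) * B) :
    ‖t‖ ≤ Real.sqrt A * Real.sqrt B := by
  have hall : ∀ c : ℂ, 0 ≤ A + 2 * ((starRingEnd ℂ) c * t).re + Complex.normSq c * B := by
    have hcl : IsClosed {c : ℂ |
        0 ≤ A + 2 * ((starRingEnd ℂ) c * t).re + Complex.normSq c * B} := by
      apply isClosed_le continuous_const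
      have hconj : Continuous fun c : ℂ => (starRingEnd ℂ) c := continuous_star
      have hre : Continuous fun c : ℂ => ((starRingEnd ℂ) c * t).re :=
        Complex.continuous_re.comp (hconj.mul continuous_const)
      exact (continuous_const.add (continuous_const.mul hre)).add
        (Complex.continuous_normSq.mul continuous_const)
    have hsub : Set.range cqC ⊆ {c : ℂ |
        0 ≤ A + 2 * ((starRingEnd ℂ) c * t).re + Complex.normSq c * B} := by
      rintro _ ⟨q, rfl⟩
      exact h q
    intro c
    have hc : c ∈ closure (Set.range cqC) := by
      rw [denseRange_cqC.closure_range]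
      trivial
    exact closure_minimal hsub hcl hc
  set S : ℝ := Complex.normSq t with hSdef
  have hSS : S = t.re * t.re + t.im * t.im := by rw [hSdef, Complex.normSq_apply]
  rcases eq_or_lt_of_le hB with hB0 | hBpos
  · have ht : t = 0 := by
      by_contra ht0
      have hS : 0 < S := Complex.normSq_pos.mpr ht0
      set nr : ℝ := A / (2 * S) + 1 with hnr
      have h1 := hall (-(nr : ℂ) * t)
      have hre : ((starRingEnd ℂ) (-(nr : ℝ) * t : ℂ) * t).re = -(nr * S) := by
        simp only [map_mul, map_neg, Complex.conj_ofReal, Complex.mul_re, Complex.mul_im,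
          Complex.neg_re, Complex.neg_im, Complex.ofReal_re, Complex.ofReal_im,
          Complex.conj_re, Complex.conj_im]
        rw [hSS]; ring
      have hns : Complex.normSq (-(nr : ℝ) * t : ℂ) = nr ^ 2 * S := by
        rw [Complex.normSq_mul, Complex.normSq_neg, Complex.normSq_ofReal, hSdef]; ring
      rw [hre, hns, ← hB0, mul_zero, add_zero] at h1
      have hnrS : nr * S = A / 2 + S := by
        rw [hnr]; field_simp
      rw [hnrS] at h1
      linarith
    rw [ht]
    simp [mul_nonneg (Real.sqrt_nonneg A) (Real.sqrt_nonneg B)]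
  · have h1 := hall (-((B⁻¹ : ℝ) : ℂ) * t)
    have hre : ((starRingEnd ℂ) (-((B⁻¹ : ℝ) : ℂ) * t) * t).re = -(B⁻¹ * S) := by
      simp only [map_mul, map_neg, Complex.conj_ofReal, Complex.mul_re, Complex.mul_im,
        Complex.neg_re, Complex.neg_im, Complex.ofReal_re, Complex.ofReal_im,
        Complex.conj_re, Complex.conj_im]
      rw [hSS]; ring
    have hns : Complex.normSq (-((B⁻¹ : ℝ) : ℂ) * t) = B⁻¹ ^ 2 * S := by
      rw [Complex.normSq_mul, Complex.normSq_neg, Complex.normSq_ofReal, hSdef]; ring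
    rw [hre, hns] at h1
    have hBne : B ≠ 0 := ne_of_gt hBpos
    have h2 : 0 ≤ A * B * B - S * B := by
      have h3 := mul_nonneg hBpos.le (mul_nonneg hBpos.le h1)
      calc (0:ℝ) ≤ B * (B * (A + 2 * -(B⁻¹ * S) + B⁻¹ ^ 2 * S * B)) := h3
        _ = A * B * B - S * B := by field_simp; ring
    have hkey : S ≤ A * B := by
      have h4 : S * B ≤ (A * B) * B := by linarith
      exact le_of_mul_le_mul_right h4 hBpos
    calc ‖t‖ = Real.sqrt S := Complex.norm_def t
      _ ≤ Real.sqrt (A * B) := Real.sqrt_le_sqrt hkey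
      _ = Real.sqrt A * Real.sqrt B := Real.sqrt_mul hA B

lemma cauchySchwarz {X : Type*} [AddCommGroup X] [Module (L0 Ω μ) X] (K : KHInner Ω μ X)
    (x y : X) : absL (K.inner x y) ≤ K.knorm x * K.knorm y := by
  have hxx : ⇑(K.inner x x) =ᵐ[μ] fun ω => (((reL (K.inner x x)) ω : ℝ) : ℂ) := by
    conv_lhs => rw [K.self_real x]
    exact ofRealL_coe _
  have hyy : ⇑(K.inner y y) =ᵐ[μ] fun ω => (((reL (K.inner y y)) ω : ℝ) : ℂ) := by
    conv_lhs => rw [K.self_real y]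
    exact ofRealL_coe _
  have key : ∀ q : ℚ × ℚ, ∀ᵐ ω ∂μ,
      0 ≤ (reL (K.inner x x)) ω + 2 * ((starRingEnd ℂ) (cqC q) * (K.inner x y) ω).re
        + Complex.normSq (cqC q) * (reL (K.inner y y)) ω := by
    intro q
    set c : L0 Ω μ := AEEqFun.const Ω (cqC q) with hc
    have hexp : K.inner (x + c • y) (x + c • y) =
        (K.inner x x + conjL c * K.inner x y)
          + (c * conjL (K.inner x y) + c * (conjL c * K.inner y y)) := by
      rw [K.add_left, inner_add_right, inner_add_right, K.smul_left, inner_smul_right,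
        K.smul_left, inner_smul_right, K.conj_symm y x]
    have h0 := K.self_nonneg (x + c • y)
    rw [hexp] at h0
    filter_upwards [AEEqFun.coeFn_le.2 h0,
      reL_coe ((K.inner x x + conjL c * K.inner x y)
        + (c * conjL (K.inner x y) + c * (conjL c * K.inner y y))),
      AEEqFun.coeFn_add (K.inner x x + conjL c * K.inner x y)
        (c * conjL (K.inner x y) + c * (conjL c * K.inner y y)),
      AEEqFun.coeFn_add (K.inner x x) (conjL c * K.inner x y),
      AEEqFun.coeFn_add (c * conjL (K.inner x y)) (c * (conjL c * K.inner y y)),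
      AEEqFun.coeFn_mul (conjL c) (K.inner x y),
      AEEqFun.coeFn_mul c (conjL (K.inner x y)),
      AEEqFun.coeFn_mul c (conjL c * K.inner y y),
      AEEqFun.coeFn_mul (conjL c) (K.inner y y),
      conjL_coe c, conjL_coe (K.inner x y), AEEqFun.coeFn_const Ω (cqC q),
      hxx, hyy, AEEqFun.coeFn_zero (β := ℝ) (μ := μ),
      reL_coe (K.inner x x), reL_coe (K.inner y y)]
      with ω e1 e2 e3 e4 e5 e6 e7 e8 e9 e10 e11 e12 e13 e14 e15 e16 e17
    rw [e2] at e1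
    rw [e3, Pi.add_apply, e4, e5, Pi.add_apply, Pi.add_apply, e6, e7, e8,
      Pi.mul_apply, Pi.mul_apply, Pi.mul_apply, e9, Pi.mul_apply,
      e10, e11, e13, e14, e12] at e1
    rw [e15, Pi.zero_apply] at e1
    simp only [Function.const_apply] at e1
    simp only [Complex.add_re, Complex.mul_re, Complex.mul_im, Complex.ofReal_re,
      Complex.ofReal_im, Complex.conj_re, Complex.conj_im, Complex.normSq_apply] at e1 ⊢
    nlinarith [e1]
  have hAae := AEEqFun.coeFn_le.2 (K.self_nonneg x)
  have hBae := AEEqFun.coeFn_le.2 (K.self_nonneg y)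
  rw [← AEEqFun.coeFn_le]
  filter_upwards [ae_all_iff.2 key, hAae, hBae, absL_coe (K.inner x y), knorm_coe K x,
    knorm_coe K y, AEEqFun.coeFn_mul (K.knorm x) (K.knorm y),
    AEEqFun.coeFn_zero (β := ℝ) (μ := μ)]
    with ω h1 h2 h3 h4 h5 h6 h7 h8
  rw [h8, Pi.zero_apply] at h2 h3
  rw [h4, h7, Pi.mul_apply, h5, h6]
  exact pointCS h2 h3 h1

end CS


section Adjoint

variable {X : Type*} [AddCommGroup X] [Module (L0 Ω μ) X] (K : KHInner Ω μ X)
  (D : Submodule (L0 Ω μ) X)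

lemma adj_unique {a : D →ₗ[L0 Ω μ] X} {ψ χ χ' : X} (hχ : χ ∈ D) (hχ' : χ' ∈ D)
    (h1 : IsAdjAt K D a ψ χ) (h2 : IsAdjAt K D a ψ χ') : χ = χ' := by
  have key : ∀ φ : D, K.inner (φ : X) (χ - χ') = 0 := by
    intro φ
    rw [inner_sub_right, ← h1 φ, ← h2 φ, sub_self]
  have h3 := key ⟨χ - χ', D.sub_mem hχ hχ'⟩
  have h4 := K.definite _ h3
  exact sub_eq_zero.1 h4

lemma mem_lplus {a : D →ₗ[L0 Ω μ] X} (h1 : MapsD D a)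
    (h2 : ∀ ψ ∈ D, ∃ χ ∈ D, IsAdjAt K D a ψ χ) : a ∈ LPlus K D :=
  ⟨h1, fun ψ hψ => by obtain ⟨χ, _, hx⟩ := h2 ψ hψ; exact ⟨χ, hx⟩, h2⟩

end Adjoint

end Helpers

/-- `L⁺(D)` is an `O*`-algebra over `L⁰` with domain `D`: it
contains the identity, is closed under addition, `L⁰`-scalar multiplication,
composition and the involution `a ↦ a⁺ = a*|D`, and each of its elements is
(bo)-closable. -/
theorem statement5 {X : Type*} [AddCommGroup X] [Module (L0 Ω μ) X]
    (K : KHInner Ω μ X) (hK : K.IsKH) (D : Submodule (L0 Ω μ) X)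
    (hD : BODenseN K.knorm (D : Set X)) :
    (D.subtype ∈ LPlus K D) ∧
    (∀ a ∈ LPlus K D, ∀ b ∈ LPlus K D, a + b ∈ LPlus K D) ∧
    (∀ c : L0 Ω μ, ∀ a ∈ LPlus K D, c • a ∈ LPlus K D) ∧
    (∀ a ∈ LPlus K D, ∀ b, ∀ hb : b ∈ LPlus K D, compD D a b hb.1 ∈ LPlus K D) ∧
    (∀ a ∈ LPlus K D, ∃ aplus ∈ LPlus K D, ∀ φ ψ : D,
        K.inner (a φ) (ψ : X) = K.inner (φ : X) (aplus ψ)) ∧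
    (∀ a ∈ LPlus K D, BOClosableOp K D a) := by
  classical
  refine ⟨?_, ?_, ?_, ?_, ?_, ?_⟩
  · -- identity
    refine mem_lplus K D (fun φ => φ.2) ?_
    intro ψ hψ
    exact ⟨ψ, hψ, fun φ => rfl⟩
  · -- addition
    intro a ha b hb
    refine mem_lplus K D (fun φ => ?_) ?_
    · rw [LinearMap.add_apply]
      exact D.add_mem (ha.1 φ) (hb.1 φ)
    · intro ψ hψ
      obtain ⟨χa, hχa, hadja⟩ := ha.2.2 ψ hψ
      obtain ⟨χb, hχb, hadjb⟩ := hb.2.2 ψ hψ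
      refine ⟨χa + χb, D.add_mem hχa hχb, fun φ => ?_⟩
      rw [LinearMap.add_apply, K.add_left, hadja φ, hadjb φ, inner_add_right]
  · -- scalar multiplication
    intro c a ha
    refine mem_lplus K D (fun φ => ?_) ?_
    · rw [LinearMap.smul_apply]
      exact D.smul_mem c (ha.1 φ)
    · intro ψ hψ
      obtain ⟨χ, hχ, hadj⟩ := ha.2.2 ψ hψ
      refine ⟨conjL c • χ, D.smul_mem _ hχ, fun φ => ?_⟩
      rw [LinearMap.smul_apply, K.smul_left, hadj φ, inner_smul_right, conjL_conjL]
  · -- composition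
    intro a ha b hb
    refine mem_lplus K D (fun φ => ha.1 _) ?_
    intro ψ hψ
    obtain ⟨χa, hχa, hadja⟩ := ha.2.2 ψ hψ
    obtain ⟨χb, hχb, hadjb⟩ := hb.2.2 χa hχa
    refine ⟨χb, hχb, fun φ => ?_⟩
    have h1 := hadja (LinearMap.codRestrict D b hb.1 φ)
    have h2 : K.inner ((LinearMap.codRestrict D b hb.1 φ : D) : X) χa
        = K.inner (φ : X) χb := hadjb φ
    show K.inner (a (LinearMap.codRestrict D b hb.1 φ)) ψ = K.inner (φ : X) χb
    rw [h1, h2]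
  · -- involution
    intro a ha
    set F : D → X := fun ψ => (ha.2.2 (ψ : X) ψ.2).choose with hF
    have hFD : ∀ ψ : D, F ψ ∈ D := fun ψ => (ha.2.2 (ψ : X) ψ.2).choose_spec.1
    have hFadj : ∀ ψ : D, IsAdjAt K D a (ψ : X) (F ψ) :=
      fun ψ => (ha.2.2 (ψ : X) ψ.2).choose_spec.2
    have hFuniq : ∀ (ψ : D) (χ : X), χ ∈ D → IsAdjAt K D a (ψ : X) χ → F ψ = χ :=
      fun ψ χ hχ hadj => adj_unique K D (hFD ψ) hχ (hFadj ψ) hadj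
    refine ⟨{ toFun := F
              map_add' := ?_
              map_smul' := ?_ }, mem_lplus K D (fun φ => hFD φ) ?_, fun φ ψ => hFadj ψ φ⟩
    · intro ψ₁ ψ₂
      refine hFuniq _ _ (D.add_mem (hFD ψ₁) (hFD ψ₂)) ?_
      intro φ
      rw [Submodule.coe_add, inner_add_right, hFadj ψ₁ φ, hFadj ψ₂ φ, inner_add_right]
    · intro d ψ
      refine hFuniq _ _ (D.smul_mem d (hFD ψ)) ?_
      intro φ
      rw [Submodule.coe_smul, inner_smul_right, hFadj ψ φ, RingHom.id_apply,
        inner_smul_right]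
    · intro ψ hψ
      refine ⟨a ⟨ψ, hψ⟩, ha.1 _, fun φ => ?_⟩
      show K.inner (F φ) ψ = K.inner (φ : X) (a ⟨ψ, hψ⟩)
      have h1 : K.inner (a ⟨ψ, hψ⟩) (φ : X) = K.inner ψ (F φ) := hFadj φ ⟨ψ, hψ⟩
      rw [K.conj_symm (F φ) ψ, ← h1, ← K.conj_symm]
  · -- closability
    intro a ha ι hne hsl f y h1 h2
    letI := hne
    letI := hsl
    obtain ⟨e, heA, heI, heB⟩ := h1
    obtain ⟨e', he'A, he'I, he'B⟩ := h2
    have hfb : ∀ i, K.knorm ((f i : X)) ≤ e i := by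
      intro i
      have h := heB i
      simp only [sub_zero] at h
      exact le_trans (le_abs_self _) h
    have hab : ∀ i, K.knorm (a (f i) - y) ≤ e' i := by
      intro i
      have h := he'B i
      simp only [sub_zero] at h
      exact le_trans (le_abs_self _) h
    have hzero : ∀ ψ : X, ψ ∈ D → K.inner y ψ = 0 := by
      intro ψ hψ
      obtain ⟨χ, hχ, hadj⟩ := ha.2.2 ψ hψ
      apply absL_nonpos_eq_zero
      apply bound_le_zero he'A he'I heA heI (knorm_nonneg K ψ) (knorm_nonneg K χ)
      intro i
      have hsplit : K.inner y ψ = K.inner (y - a (f i)) ψ + K.inner (a (f i)) ψ := by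
        rw [← K.add_left, sub_add_cancel]
      rw [hsplit, hadj (f i)]
      refine le_trans (absL_add_le _ _) (addL_le_addL ?_ ?_)
      · refine le_trans (cauchySchwarz K _ _) ?_
        rw [mul_comm]
        refine mulL_le_mulL (knorm_nonneg K ψ) (knorm_nonneg K _) (le_refl _) ?_
        rw [knorm_sub_comm]
        exact hab i
      · refine le_trans (cauchySchwarz K _ _) ?_
        rw [mul_comm]
        exact mulL_le_mulL (knorm_nonneg K χ) (knorm_nonneg K _) (le_refl _) (hfb i)
    obtain ⟨κ, hκn, hκs, d, hdD, hdc⟩ := hD y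
    letI := hκn
    letI := hκs
    obtain ⟨ed, hedA, hedI, hedB⟩ := hdc
    have hdb : ∀ j, K.knorm (y - d j) ≤ ed j := by
      intro j
      have h := hedB j
      simp only [sub_zero] at h
      rw [knorm_sub_comm]
      exact le_trans (le_abs_self _) h
    have hyy : K.inner y y = 0 := by
      apply absL_nonpos_eq_zero
      apply scale_le_zero hedA hedI (knorm_nonneg K y)
      intro j
      have hsplit : K.inner y y = K.inner y (y - d j) := by
        rw [inner_sub_right, hzero (d j) (hdD j), sub_zero]
      rw [hsplit]
      exact le_trans (cauchySchwarz K _ _)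
        (mulL_le_mulL (knorm_nonneg K y) (knorm_nonneg K _) (le_refl _) (hdb j))
    exact K.definite y hyy


end KHPaper
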